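/- arXiv:1804.02577 — 6 statements merged into one kernel-verified Lean document; each statement's English description precedes it below -/
import Mathlib

section
/- For every (ξ,μ) ∈ 𝒫 = (1.18,1.19) × (−10,−9), the images G_{ξ,μ}(𝒜_{ξ,μ}) and G_{ξ,μ}(ℬ_{ξ,μ}) are disjoint, and G_{ξ,μ}(Δ \ (𝒜_{ξ,μ} ∪ ℬ_{ξ,μ})) ∩ Δ = ∅. -/
open Set

noncomputable def G (ξ μ : ℝ) : ℝ × ℝ × ℝ → ℝ × ℝ × ℝ :=
  fun p => (p.2.1, μ + p.2.1 ^ 2, ξ * p.2.2 + p.2.1)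

def Cube : Set (ℝ × ℝ × ℝ) := Icc (-4) 4 ×ˢ Icc (-4) 4 ×ˢ Icc (-40) 22

noncomputable def am (μ : ℝ) : ℝ := -Real.sqrt (4 - μ)
noncomputable def bm (μ : ℝ) : ℝ := -Real.sqrt (-4 - μ)
noncomputable def cm (μ : ℝ) : ℝ := Real.sqrt (-4 - μ)
noncomputable def dm (μ : ℝ) : ℝ := Real.sqrt (4 - μ)

/-- The sub-cube `𝒜 = [−4,4] × I_μ × [−40,22]`. -/
noncomputable def legA (μ : ℝ) : Set (ℝ × ℝ × ℝ) :=
  Icc (-4) 4 ×ˢ Icc (am μ) (bm μ) ×ˢ Icc (-40) 22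

/-- The sub-cube `ℬ = [−4,4] × J_μ × [−40,22]`. -/
noncomputable def legB (μ : ℝ) : Set (ℝ × ℝ × ℝ) :=
  Icc (-4) 4 ×ˢ Icc (cm μ) (dm μ) ×ˢ Icc (-40) 22

theorem disjoint_images_and_escaping (ξ μ : ℝ)
    (hξ : ξ ∈ Ioo (1.18 : ℝ) 1.19) (hμ : μ ∈ Ioo (-10 : ℝ) (-9)) :
    G ξ μ '' legA μ ∩ G ξ μ '' legB μ = ∅ ∧
    G ξ μ '' (Cube \ (legA μ ∪ legB μ)) ∩ Cube = ∅ := by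
  obtain ⟨hμ1, hμ2⟩ := hμ
  have hpos : (0:ℝ) < -4 - μ := by linarith
  have hsq : 0 < Real.sqrt (-4 - μ) := Real.sqrt_pos.mpr hpos
  constructor
  · ext q
    simp only [mem_inter_iff, mem_image, mem_empty_iff_false, iff_false]
    rintro ⟨⟨p, hp, rfl⟩, ⟨r, hr, hqr⟩⟩
    have h1 : p.2.1 ≤ bm μ := hp.2.1.2
    have h2 : cm μ ≤ r.2.1 := hr.2.1.1
    have h3 : r.2.1 = p.2.1 := congrArg (fun q : ℝ × ℝ × ℝ => q.1) hqr
    unfold bm cm at *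
    linarith
  · ext q
    simp only [mem_inter_iff, mem_image, mem_empty_iff_false, iff_false]
    rintro ⟨⟨p, ⟨hpC, hpAB⟩, rfl⟩, hqC⟩
    set y := p.2.1 with hy
    have hy2 : μ + y ^ 2 ∈ Icc (-4 : ℝ) 4 := hqC.2.1
    obtain ⟨hlo, hhi⟩ := hy2
    have hsq1 : -4 - μ ≤ y ^ 2 := by linarith
    have hsq2 : y ^ 2 ≤ 4 - μ := by linarith
    apply hpAB
    rcases le_or_gt 0 y with hy0 | hy0
    · right
      refine ⟨hpC.1, ⟨?_, ?_⟩, hpC.2.2⟩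
      · calc cm μ = Real.sqrt (-4 - μ) := rfl
          _ ≤ Real.sqrt (y ^ 2) := Real.sqrt_le_sqrt hsq1
          _ = y := by rw [Real.sqrt_sq hy0]
      · calc y = Real.sqrt (y ^ 2) := (Real.sqrt_sq hy0).symm
          _ ≤ Real.sqrt (4 - μ) := Real.sqrt_le_sqrt hsq2
    · left
      have hy0' : 0 ≤ -y := by linarith
      have h1 : -y ≤ Real.sqrt (4 - μ) := by
        calc -y = Real.sqrt ((-y) ^ 2) := (Real.sqrt_sq hy0').symm
          _ ≤ Real.sqrt (4 - μ) := by apply Real.sqrt_le_sqrt; nlinarith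
      have h2 : Real.sqrt (-4 - μ) ≤ -y := by
        calc Real.sqrt (-4 - μ) ≤ Real.sqrt ((-y) ^ 2) := by
              apply Real.sqrt_le_sqrt; nlinarith
          _ = -y := Real.sqrt_sq hy0'
      refine ⟨hpC.1, ⟨?_, ?_⟩, hpC.2.2⟩
      · unfold am; linarith
      · unfold bm; linarith
end

section
/- Invariance of the unstable cone field of angle 1/2: let ξ ∈ (1.18,1.19) and y ∈ ℝ with |y| > √5. If a vector (u,v,w) ∈ ℝ³ satisfies |u| < (1/2)·√(v² + w²), then its image (u₁,v₁,w₁) = (v, 2y·v, v + ξ·w) under the derivative of G_{ξ,μ} satisfies |u₁| < (1/2)·√(v₁² + w₁²). -/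
open Set

theorem unstable_cone_invariance (ξ y : ℝ)
    (hξ : ξ ∈ Ioo (1.18 : ℝ) 1.19) (hy : Real.sqrt 5 < |y|)
    (u v w : ℝ) (h : |u| < (1 / 2) * Real.sqrt (v ^ 2 + w ^ 2)) :
    |v| < (1 / 2) * Real.sqrt ((2 * y * v) ^ 2 + (v + ξ * w) ^ 2) := by
  have hvw : v ≠ 0 ∨ w ≠ 0 := by
    by_contra hc
    push_neg at hc
    obtain ⟨hv, hw⟩ := hc
    rw [hv, hw] at h
    simp at h
    exact absurd h (not_lt.2 (abs_nonneg u))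
  have hy2 : 5 < y ^ 2 := by
    nlinarith [Real.sq_sqrt (show (0:ℝ) ≤ 5 by norm_num), Real.sqrt_nonneg 5,
      abs_nonneg y, sq_abs y]
  have key : (2 * |v|) ^ 2 < (2 * y * v) ^ 2 + (v + ξ * w) ^ 2 := by
    rcases hvw with hv | hw
    · nlinarith [sq_nonneg (v + ξ * w), sq_abs v, sq_pos_of_ne_zero hv]
    · rcases eq_or_ne v 0 with rfl | hv
      · have hξpos : (0:ℝ) < ξ := by nlinarith [hξ.1]
        have : (0:ℝ) < (ξ * w) ^ 2 := by positivity
        simpa using this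
      · nlinarith [sq_nonneg (v + ξ * w), sq_abs v, sq_pos_of_ne_zero hv]
  have hlt : 2 * |v| < Real.sqrt ((2 * y * v) ^ 2 + (v + ξ * w) ^ 2) :=
    (Real.lt_sqrt (by positivity)).2 key
  linarith
end

section
/- Invariance of the strong unstable cone field of angle 1/2: let ξ ∈ (1.18,1.19) and y ∈ ℝ with |y| > √5. If a vector (u,v,w) ∈ ℝ³ satisfies √(u² + w²) < (1/2)·|v|, then its image (u₁,v₁,w₁) = (v, 2y·v, v + ξ·w) under the derivative of G_{ξ,μ} satisfies √(u₁² + w₁²) < (1/2)·|v₁|. -/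
open Set

theorem strong_unstable_cone_invariance (ξ y : ℝ)
    (hξ : ξ ∈ Ioo (1.18 : ℝ) 1.19) (hy : Real.sqrt 5 < |y|)
    (u v w : ℝ) (h : Real.sqrt (u ^ 2 + w ^ 2) < (1 / 2) * |v|) :
    Real.sqrt (v ^ 2 + (v + ξ * w) ^ 2) < (1 / 2) * |2 * y * v| := by
  obtain ⟨hξ1, hξ2⟩ := hξ
  have hs5 : Real.sqrt 5 ^ 2 = 5 := Real.sq_sqrt (by norm_num)
  have hs5pos : 0 < Real.sqrt 5 := Real.sqrt_pos.mpr (by norm_num)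
  have hv : v ≠ 0 := by
    intro hv0
    simp [hv0] at h
    exact absurd h (not_lt.mpr (Real.sqrt_nonneg _))
  have hvpos : 0 < |v| := abs_pos.mpr hv
  have hw : |w| < |v| / 2 := by
    have : |w| ≤ Real.sqrt (u ^ 2 + w ^ 2) := by
      rw [← Real.sqrt_sq_eq_abs]
      exact Real.sqrt_le_sqrt (by nlinarith [sq_nonneg u])
    linarith
  have hy2 : 5 < y ^ 2 := by
    have : Real.sqrt 5 ^ 2 < |y| ^ 2 := by
      exact pow_lt_pow_left₀ hy (le_of_lt hs5pos) (by norm_num)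
    rwa [hs5, sq_abs] at this
  have hypos : 0 < |y| := lt_trans hs5pos hy
  have hrhs : (1 / 2) * |2 * y * v| = |y| * |v| := by
    rw [abs_mul, abs_mul]
    simp [abs_of_nonneg]
    ring
  rw [hrhs]
  rw [Real.sqrt_lt' (by positivity)]
  have h1 : (v + ξ * w) ^ 2 ≤ (|v| + 1.19 * |w|) ^ 2 := by
    have habs : |v + ξ * w| ≤ |v| + 1.19 * |w| := by
      calc |v + ξ * w| ≤ |v| + |ξ * w| := abs_add_le _ _
        _ ≤ |v| + 1.19 * |w| := by
            rw [abs_mul]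
            have : |ξ| ≤ 1.19 := by rw [abs_of_pos (by linarith : (0:ℝ) < ξ)]; linarith
            nlinarith [abs_nonneg w]
    calc (v + ξ * w) ^ 2 = |v + ξ * w| ^ 2 := (sq_abs _).symm
      _ ≤ (|v| + 1.19 * |w|) ^ 2 := by
          nlinarith [abs_nonneg (v + ξ * w), abs_nonneg w, abs_nonneg v]
  have hv2 : |v| ^ 2 = v ^ 2 := sq_abs v
  have hv2pos : 0 < v ^ 2 := by positivity
  have hA : 5 * v ^ 2 < y ^ 2 * v ^ 2 := by nlinarith
  have hB : (|v| + 1.19 * |w|) ^ 2 ≤ (1.595 * |v|) ^ 2 := by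
    nlinarith [abs_nonneg w, abs_nonneg v]
  have hC : (|y| * |v|) ^ 2 = y ^ 2 * v ^ 2 := by
    rw [mul_pow, sq_abs, sq_abs]
  nlinarith
end

section
/- Uniform expansion in the unstable cone: let ξ ∈ (1.18,1.19) and y ∈ ℝ with |y| > √5. Then for every pair (v,w) ∈ ℝ² with (v,w) ≠ (0,0), one has (2y·v)² + (v + ξ·w)² > v² + w². Consequently, for any vector (u,v,w) with |u| ≤ (1/2)·√(v²+w²) and (v,w) ≠ (0,0), the image (u₁,v₁,w₁) = (v, 2y·v, v + ξ·w) satisfies max{|u₁|, √(v₁² + w₁²)} > max{|u|, √(v² + w²)}. -/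
open Set

theorem uniform_expansion_in_unstable_cone (ξ y : ℝ)
    (hξ : ξ ∈ Ioo (1.18 : ℝ) 1.19) (hy : Real.sqrt 5 < |y|) :
    (∀ v w : ℝ, (v, w) ≠ ((0 : ℝ), (0 : ℝ)) →
      v ^ 2 + w ^ 2 < (2 * y * v) ^ 2 + (v + ξ * w) ^ 2) ∧
    (∀ u v w : ℝ, |u| ≤ (1 / 2) * Real.sqrt (v ^ 2 + w ^ 2) →
      (v, w) ≠ ((0 : ℝ), (0 : ℝ)) →
      max |u| (Real.sqrt (v ^ 2 + w ^ 2)) <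
        max |v| (Real.sqrt ((2 * y * v) ^ 2 + (v + ξ * w) ^ 2))) := by
  obtain ⟨hξ1, hξ2⟩ := hξ
  have h5 : 5 < y ^ 2 := by
    have h1 : Real.sqrt 5 ^ 2 = 5 := Real.sq_sqrt (by norm_num)
    nlinarith [Real.sqrt_nonneg 5, sq_abs y]
  have key : ∀ v w : ℝ, (v, w) ≠ ((0 : ℝ), (0 : ℝ)) →
      v ^ 2 + w ^ 2 < (2 * y * v) ^ 2 + (v + ξ * w) ^ 2 := by
    intro v w hvw
    have hvw' : v ≠ 0 ∨ w ≠ 0 := by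
      by_contra h
      push_neg at h
      exact hvw (by simp [h.1, h.2])
    rcases hvw' with hv | hw
    · have hv2 : 0 < v ^ 2 := by positivity
      nlinarith [sq_nonneg (ξ * w + 20 * v),
        mul_pos (show (0:ℝ) < y ^ 2 - 5 by linarith) hv2,
        mul_nonneg (show (0:ℝ) ≤ 19 * ξ ^ 2 - 20 by nlinarith) (sq_nonneg w)]
    · have hw2 : 0 < w ^ 2 := by positivity
      nlinarith [sq_nonneg (ξ * w + 20 * v),
        mul_nonneg (show (0:ℝ) ≤ y ^ 2 - 5 by linarith) (sq_nonneg v),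
        mul_pos (show (0:ℝ) < 19 * ξ ^ 2 - 20 by nlinarith) hw2]
  refine ⟨key, fun u v w hu hvw => ?_⟩
  have h1 := key v w hvw
  have hlt : Real.sqrt (v ^ 2 + w ^ 2) <
      Real.sqrt ((2 * y * v) ^ 2 + (v + ξ * w) ^ 2) :=
    Real.sqrt_lt_sqrt (by positivity) h1
  have hmaxL : max |u| (Real.sqrt (v ^ 2 + w ^ 2)) = Real.sqrt (v ^ 2 + w ^ 2) := by
    refine max_eq_right (hu.trans ?_)
    nlinarith [Real.sqrt_nonneg (v ^ 2 + w ^ 2)]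
  rw [hmaxL]
  exact hlt.trans_le (le_max_right _ _)
end

section
/- Vectors on the boundary of the stable cone are mapped outside its closure: let ξ ∈ (1.18,1.19), ϑ ∈ (0, 2√5], and y ∈ ℝ with |y| > √5. If (u,v,w) ∈ ℝ³ is a nonzero vector with √(v² + w²) = ϑ·|u|, then its image (u₁,v₁,w₁) = (v, 2y·v, v + ξ·w) under the derivative of G_{ξ,μ} satisfies √(v₁² + w₁²) > ϑ·|u₁|. -/
open Set

theorem stable_cone_boundary_mapped_outside (ξ ϑ y : ℝ)
    (hξ : ξ ∈ Ioo (1.18 : ℝ) 1.19) (hϑ : ϑ ∈ Ioc (0 : ℝ) (2 * Real.sqrt 5))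
    (hy : Real.sqrt 5 < |y|)
    (u v w : ℝ) (hne : (u, v, w) ≠ ((0 : ℝ), (0 : ℝ), (0 : ℝ)))
    (h : Real.sqrt (v ^ 2 + w ^ 2) = ϑ * |u|) :
    ϑ * |v| < Real.sqrt ((2 * y * v) ^ 2 + (v + ξ * w) ^ 2) := by
  obtain ⟨hϑ0, hϑ5⟩ := hϑ
  obtain ⟨hξ1, _⟩ := hξ
  rcases eq_or_ne v 0 with hv | hv
  · subst hv
    have hw : w ≠ 0 := by
      rintro rfl
      simp only [ne_eq, Prod.mk.injEq] at hne
      have hu : ϑ * |u| = 0 := by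
        rw [← h]; simp
      have : |u| = 0 := by
        rcases mul_eq_zero.mp hu with h' | h'
        · exact absurd h' (ne_of_gt hϑ0)
        · exact h'
      exact hne (by simp [abs_eq_zero.mp this])
    have hpos : (0 : ℝ) < (2 * y * 0) ^ 2 + (0 + ξ * w) ^ 2 := by
      have hξ0 : ξ ≠ 0 := by norm_num at hξ1; nlinarith
      have h2 : (0:ℝ) < (ξ * w) ^ 2 := by positivity
      nlinarith [sq_nonneg (2 * y * 0)]
    simpa using Real.sqrt_pos.mpr hpos
  · have hv0 : 0 < |v| := abs_pos.mpr hv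
    have h5 : (0 : ℝ) ≤ Real.sqrt 5 := Real.sqrt_nonneg 5
    calc ϑ * |v| ≤ 2 * Real.sqrt 5 * |v| :=
          mul_le_mul_of_nonneg_right hϑ5 (abs_nonneg v)
      _ < 2 * |y| * |v| := by nlinarith
      _ = |2 * y * v| := by rw [abs_mul, abs_mul, abs_two]
      _ = Real.sqrt ((2 * y * v) ^ 2) := (Real.sqrt_sq_eq_abs _).symm
      _ ≤ Real.sqrt ((2 * y * v) ^ 2 + (v + ξ * w) ^ 2) :=
          Real.sqrt_le_sqrt (by nlinarith [sq_nonneg (v + ξ * w)])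
end

section
/- Markov partition property: for every (ξ,μ) ∈ 𝒫 = (1.18,1.19) × (−10,−9), the set of points of the cube Δ whose image under G_{ξ,μ} remains in Δ is exactly the union of the two Markov rectangles: {p ∈ Δ : G_{ξ,μ}(p) ∈ Δ} = 𝔸_{ξ,μ} ∪ 𝔹_{ξ,μ}. -/
open Set

noncomputable def parA (ξ μ : ℝ) : Set (ℝ × ℝ) :=
  {p | p.1 ∈ Icc (am μ) (bm μ) ∧ (-40 - p.1) / ξ ≤ p.2 ∧ p.2 ≤ (22 - p.1) / ξ}

noncomputable def parB (ξ μ : ℝ) : Set (ℝ × ℝ) :=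
  {p | p.1 ∈ Icc (cm μ) (dm μ) ∧ (-40 - p.1) / ξ ≤ p.2 ∧ p.2 ≤ (22 - p.1) / ξ}

noncomputable def markA (ξ μ : ℝ) : Set (ℝ × ℝ × ℝ) := Icc (-4) 4 ×ˢ parA ξ μ

noncomputable def markB (ξ μ : ℝ) : Set (ℝ × ℝ × ℝ) := Icc (-4) 4 ×ˢ parB ξ μ

private lemma zbound (ξ y z : ℝ) (hξ1 : 1.18 < ξ) (hyl : -3.8 ≤ y) (hyu : y ≤ 3.8)
    (hz1 : -40 - y ≤ z * ξ) (hz2 : z * ξ ≤ 22 - y) : -40 ≤ z ∧ z ≤ 22 := by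
  constructor <;> nlinarith

set_option maxHeartbeats 1600000 in
theorem markov_partition_property (ξ μ : ℝ)
    (hξ : ξ ∈ Ioo (1.18 : ℝ) 1.19) (hμ : μ ∈ Ioo (-10 : ℝ) (-9)) :
    {p ∈ Cube | G ξ μ p ∈ Cube} = markA ξ μ ∪ markB ξ μ := by
  obtain ⟨hξ1, hξ2⟩ := hξ
  obtain ⟨hμ1, hμ2⟩ := hμ
  have hξ0 : (0:ℝ) < ξ := by norm_num at hξ1 ⊢; linarith
  set s := Real.sqrt (-4 - μ) with hs
  set t := Real.sqrt (4 - μ) with ht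
  have hs0 : 0 ≤ s := Real.sqrt_nonneg _
  have ht0 : 0 ≤ t := Real.sqrt_nonneg _
  have hs2 : s ^ 2 = -4 - μ := Real.sq_sqrt (by linarith)
  have ht2 : t ^ 2 = 4 - μ := Real.sq_sqrt (by linarith)
  have ht4 : t ≤ 3.8 := by nlinarith
  ext ⟨x, y, z⟩
  simp only [markA, markB, parA, parB, am, bm, cm, dm, Cube, G, mem_sep_iff, mem_prod,
    mem_Icc, mem_union, mem_setOf_eq, ← hs, ← ht]
  constructor
  · rintro ⟨⟨hx, hy, hz⟩, h1, h2, h3⟩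
    have hyt : |y| ≤ t := by
      rw [ht, ← Real.sqrt_sq_eq_abs]
      exact Real.sqrt_le_sqrt (by nlinarith [h2.2])
    have hys : s ≤ |y| := by
      rw [hs, ← Real.sqrt_sq_eq_abs]
      exact Real.sqrt_le_sqrt (by nlinarith [h2.1])
    have hzl : (-40 - y) / ξ ≤ z := by
      rw [div_le_iff₀ hξ0]
      nlinarith [h3.1]
    have hzu : z ≤ (22 - y) / ξ := by
      rw [le_div_iff₀ hξ0]
      nlinarith [h3.2]
    rcases le_or_gt 0 y with hy0 | hy0
    · right
      rw [abs_of_nonneg hy0] at hyt hys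
      exact ⟨hx, ⟨hys, hyt⟩, hzl, hzu⟩
    · left
      rw [abs_of_neg hy0] at hyt hys
      exact ⟨hx, ⟨by linarith, by linarith⟩, hzl, hzu⟩
  · rintro (⟨hx, ⟨hy1, hy2⟩, hz1, hz2⟩ | ⟨hx, ⟨hy1, hy2⟩, hz1, hz2⟩)
    · rw [div_le_iff₀ hξ0] at hz1
      rw [le_div_iff₀ hξ0] at hz2
      have hyl : -3.8 ≤ y := by linarith
      have hyu : y ≤ 3.8 := by linarith
      have hy4 : -4 ≤ y ∧ y ≤ 4 := ⟨by linarith, by linarith⟩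
      have hsq1 : -4 ≤ μ + y ^ 2 := by nlinarith
      have hsq2 : μ + y ^ 2 ≤ 4 := by nlinarith
      have hzb := zbound ξ y z hξ1 hyl hyu hz1 hz2
      exact ⟨⟨hx, hy4, hzb⟩, hy4, ⟨hsq1, hsq2⟩, by linarith, by linarith⟩
    · rw [div_le_iff₀ hξ0] at hz1
      rw [le_div_iff₀ hξ0] at hz2
      have hyl : -3.8 ≤ y := by linarith
      have hyu : y ≤ 3.8 := by linarith
      have hy4 : -4 ≤ y ∧ y ≤ 4 := ⟨by linarith, by linarith⟩
      have hsq1 : -4 ≤ μ + y ^ 2 := by nlinarith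
      have hsq2 : μ + y ^ 2 ≤ 4 := by nlinarith
      have hzb := zbound ξ y z hξ1 hyl hyu hz1 hz2
      exact ⟨⟨hx, hy4, hzb⟩, hy4, ⟨hsq1, hsq2⟩, by linarith, by linarith⟩
end
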